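/- Let Ω be a finite set, F_q a finite field, and C a linear subspace of F_q^Ω. Let G ≤ Sym(Ω) be a subgroup whose order is coprime to q and such that C^g = C for every g ∈ G. Then C^g = C for every g in the 2-closure G^(2); that is, G ≤ PAut(C) implies G^(2) ≤ PAut(C). -/

import Mathlib

/-- Action of a permutation `g` on functions: `f^g (ω) = f (ω^{g⁻¹})`. -/
def permAct {Ω F : Type*} (g : Equiv.Perm Ω) (f : Ω → F) : Ω → F :=
  fun ω => f (g.symm ω)

/-- The 2-closure of a permutation group `G ≤ Sym(Ω)`: all permutations mapping each
`G`-orbit on `Ω × Ω` onto itself. -/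
def twoClosure {Ω : Type*} (G : Subgroup (Equiv.Perm Ω)) : Subgroup (Equiv.Perm Ω) where
  carrier := {g | ∀ α β : Ω, ∃ h ∈ G, g α = h α ∧ g β = h β}
  one_mem' := fun α β => ⟨1, G.one_mem, rfl, rfl⟩
  mul_mem' := by
    intro a b ha hb α β
    obtain ⟨h, hh, h1, h2⟩ := hb α β
    obtain ⟨k, hk, k1, k2⟩ := ha (h α) (h β)
    exact ⟨k * h, G.mul_mem hk hh, by simp [Equiv.Perm.mul_apply, h1, k1],
      by simp [Equiv.Perm.mul_apply, h2, k2]⟩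
  inv_mem' := by
    intro a ha α β
    obtain ⟨h, hh, h1, h2⟩ := ha (a⁻¹ α) (a⁻¹ β)
    refine ⟨h⁻¹, G.inv_mem hh, ?_, ?_⟩
    · have := congrArg (fun z => h⁻¹ z) h1
      simpa using this.symm
    · have := congrArg (fun z => h⁻¹ z) h2
      simpa using this.symm

section Aux
set_option linter.unusedSectionVars false
variable {Ω F : Type*} [Field F]

/-- `permAct` as a linear map. -/
def permActL (g : Equiv.Perm Ω) : (Ω → F) →ₗ[F] (Ω → F) where
  toFun := permAct g
  map_add' _ _ := rfl
  map_smul' _ _ := rfl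

lemma permActL_eq (g : Equiv.Perm Ω) (f : Ω → F) : permActL g f = permAct g f := rfl

lemma permAct_mul (g h : Equiv.Perm Ω) (f : Ω → F) :
    permAct (g * h) f = permAct g (permAct h f) := rfl

@[simp] lemma permAct_one (f : Ω → F) : permAct (1 : Equiv.Perm Ω) f = f := rfl

lemma permAct_inv_cancel (g : Equiv.Perm Ω) (f : Ω → F) :
    permAct g (permAct g⁻¹ f) = f := by
  rw [← permAct_mul, mul_inv_cancel, permAct_one]

lemma permAct_single [DecidableEq Ω] (g : Equiv.Perm Ω) (β : Ω) :
    permAct g (Pi.single β (1 : F)) = Pi.single (g β) 1 := by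
  funext ω
  simp [permAct, Pi.single_apply, Equiv.eq_symm_apply, eq_comm]

end Aux

/-- Let `C ≤ F^Ω` be a linear code and `G ≤ Sym(Ω)` a subgroup of
order coprime to `q = |F|` with `C^g = C` for all `g ∈ G`.  Then `C^g = C` for every
`g` in the 2-closure `G^(2)`. -/
theorem two_closure_preserves_code
    {Ω F : Type*} [Fintype Ω] [Field F] [Fintype F]
    (C : Submodule F (Ω → F)) (G : Subgroup (Equiv.Perm Ω))
    (hcop : Nat.Coprime (Nat.card G) (Fintype.card F))
    (hG : ∀ g ∈ G, permAct g '' (C : Set (Ω → F)) = C) :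
    ∀ g ∈ twoClosure G, permAct g '' (C : Set (Ω → F)) = C := by
  classical
  letI : Fintype G := Fintype.ofFinite G
  -- membership form of the hypothesis
  have hGm : ∀ h ∈ G, ∀ x ∈ C, permAct h x ∈ C := by
    intro h hh x hx
    have himg := hG h hh
    show permAct h x ∈ (C : Set (Ω → F))
    rw [← himg]
    exact Set.mem_image_of_mem _ hx
  -- |G| is invertible in F
  have hn : ((Nat.card G : F)) ≠ 0 := by
    intro h0
    have hd : ringChar F ∣ Nat.card G := ringChar.dvd h0
    have hd2 : ringChar F ∣ Fintype.card F := ringChar.dvd (FiniteField.cast_card_eq_zero F)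
    have h1 : ringChar F ∣ 1 := by
      have := Nat.dvd_gcd hd hd2
      rwa [Nat.Coprime.gcd_eq_one hcop] at this
    have h1' : ringChar F = 1 := Nat.dvd_one.mp h1
    have h2 : ((1 : ℕ) : F) = 0 := h1' ▸ CharP.cast_eq_zero F (ringChar F)
    simp at h2
  -- a projection onto C
  obtain ⟨D, hD⟩ := Submodule.exists_isCompl C
  set π₀ : (Ω → F) →ₗ[F] (Ω → F) := C.subtype.comp (C.projectionOnto D hD) with hπ₀
  have hπ₀mem : ∀ x, π₀ x ∈ C := fun x => (C.projectionOnto D hD x).2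
  have hπ₀id : ∀ x ∈ C, π₀ x = x := by
    intro x hx
    simp [hπ₀, Submodule.projectionOnto_apply_left hD ⟨x, hx⟩]
  -- the averaged, G-equivariant projection onto C
  set π : (Ω → F) →ₗ[F] (Ω → F) :=
    (Nat.card G : F)⁻¹ • ∑ g : G, (permActL (g : Equiv.Perm Ω)).comp
      (π₀.comp (permActL ((g : Equiv.Perm Ω)⁻¹))) with hπ
  have hπ_apply : ∀ x, π x = (Nat.card G : F)⁻¹ •
      ∑ g : G, permAct (g : Equiv.Perm Ω) (π₀ (permAct ((g : Equiv.Perm Ω)⁻¹) x)) := by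
    intro x
    simp [hπ, LinearMap.sum_apply, permActL_eq]
  -- π fixes C pointwise
  have hfix : ∀ x ∈ C, π x = x := by
    intro x hx
    rw [hπ_apply]
    have hterm : ∀ g : G,
        permAct (g : Equiv.Perm Ω) (π₀ (permAct ((g : Equiv.Perm Ω)⁻¹) x)) = x := by
      intro g
      rw [hπ₀id _ (hGm _ (G.inv_mem g.2) x hx), permAct_inv_cancel]
    rw [Finset.sum_congr rfl (fun g _ => hterm g)]
    have hn' : ((Fintype.card G : ℕ) : F) ≠ 0 := by
      have := hn; rwa [Nat.card_eq_fintype_card] at this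
    rw [Finset.sum_const, Finset.card_univ]
    rw [← Nat.cast_smul_eq_nsmul F (Fintype.card G) x, smul_smul,
      Nat.card_eq_fintype_card, inv_mul_cancel₀ hn', one_smul]
  -- π maps into C
  have hmem : ∀ x, π x ∈ C := by
    intro x
    rw [hπ_apply]
    exact C.smul_mem _ (C.sum_mem fun g _ => hGm _ g.2 _ (hπ₀mem _))
  have hC_iff : ∀ x, x ∈ C ↔ π x = x := fun x => ⟨hfix x, fun h => h ▸ hmem x⟩
  -- π is G-equivariant
  have hcomm : ∀ h ∈ G, ∀ f, π (permAct h f) = permAct h (π f) := by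
    intro h hh f
    have hsm : ∀ (c : F) (v : Ω → F), permAct h (c • v) = c • permAct h v := fun c v => rfl
    have hsum : ∀ (A : G → Ω → F), permAct h (∑ g : G, A g) = ∑ g : G, permAct h (A g) := by
      intro A
      show permActL h (∑ g : G, A g) = _
      rw [map_sum]
      rfl
    rw [hπ_apply, hπ_apply, hsm, hsum]
    congr 1
    refine Eq.symm (Fintype.sum_equiv (Equiv.mulLeft (⟨h, hh⟩ : G)) _ _ ?_)
    intro g
    refine Eq.symm ?_
    have e1 : permAct (((((⟨h, hh⟩ : G) * g : G)) : Equiv.Perm Ω))⁻¹ (permAct h f)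
        = permAct ((g : Equiv.Perm Ω))⁻¹ f := by
      rw [← permAct_mul]
      push_cast
      group
    show permAct (((((⟨h, hh⟩ : G) * g : G)) : Equiv.Perm Ω))
        (π₀ (permAct (((((⟨h, hh⟩ : G) * g : G)) : Equiv.Perm Ω))⁻¹ (permAct h f)))
      = permAct h (permAct (g : Equiv.Perm Ω) (π₀ (permAct ((g : Equiv.Perm Ω))⁻¹ f)))
    rw [e1, ← permAct_mul]
    rfl
  -- matrix entries of π
  set E : Ω → Ω → F := fun α β => π (Pi.single β (1 : F)) α with hE
  -- entries are constant on G-orbits of pairs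
  have hE_inv : ∀ h ∈ G, ∀ α β, E (h α) (h β) = E α β := by
    intro h hh α β
    have hc := hcomm h hh (Pi.single β 1)
    rw [permAct_single] at hc
    have := congrFun hc (h α)
    simpa [hE, permAct, Equiv.symm_apply_apply] using this
  -- expansion of π through its entries
  have hexp : ∀ (f : Ω → F) (ω : Ω), π f ω = ∑ β, f β * E ω β := by
    intro f ω
    have hf : f = ∑ β : Ω, f β • (Pi.single β (1 : F) : Ω → F) := by
      funext x
      simp [Finset.sum_apply, Pi.single_apply, mul_ite]
    conv_lhs => rw [hf]
    rw [map_sum]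
    simp [Finset.sum_apply, hE]
  -- the key orbit computation for elements of the 2-closure
  have hkey : ∀ g ∈ twoClosure G, ∀ ω β, E ω (g β) = E (g⁻¹ ω) β := by
    intro g hg ω β
    obtain ⟨h, hh, h1, h2⟩ := (twoClosure G).inv_mem hg ω (g β)
    have hb : β = h (g β) := by simpa using h2
    calc E ω (g β) = E (h ω) (h (g β)) := (hE_inv h hh ω (g β)).symm
      _ = E (g⁻¹ ω) β := by rw [← h1, ← hb]
  -- π commutes with the 2-closure
  have hcomm2 : ∀ g ∈ twoClosure G, ∀ f, π (permAct g f) = permAct g (π f) := by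
    intro g hg f
    funext ω
    show π (permAct g f) ω = π f (g.symm ω)
    rw [hexp, hexp]
    rw [← Equiv.sum_comp g (fun β => permAct g f β * E ω β)]
    refine Finset.sum_congr rfl fun β _ => ?_
    have h1 : permAct g f (g β) = f β := by
      simp [permAct, Equiv.symm_apply_apply]
    rw [h1, hkey g hg ω β]
    rfl
  -- conclusion
  have hmap : ∀ g ∈ twoClosure G, ∀ x ∈ C, permAct g x ∈ C := by
    intro g hg x hx
    exact (hC_iff _).mpr (by rw [hcomm2 g hg, (hC_iff x).mp hx])
  intro g hg
  apply Set.Subset.antisymm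
  · rintro _ ⟨x, hx, rfl⟩
    exact hmap g hg x hx
  · intro y hy
    exact ⟨permAct g⁻¹ y, hmap g⁻¹ ((twoClosure G).inv_mem hg) y hy, permAct_inv_cancel g y⟩
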